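/- Let S be a finite set of n points in ℝ² and let k be an integer with 1 ≤ k ≤ n. Then there exists an optimal k-clustering 𝒞 of S (i.e., a partition of S into at most k nonempty clusters minimizing the sum of the perimeters of the clusters) such that the convex hulls of distinct clusters of 𝒞 are pairwise disjoint. -/

import Mathlib

noncomputable section

/-- The Euclidean plane. -/
abbrev Plane := EuclideanSpace ℝ (Fin 2)

/-- Perimeter of a bounded set via Cauchy's formula. -/
noncomputable def perim (C : Set Plane) : ℝ :=
  ∫ θ in (0:ℝ)..(2 * Real.pi),
    sSup ((fun p : Plane => p 0 * Real.cos θ + p 1 * Real.sin θ) '' C)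

/-- support-type function -/
def suppF (p : Plane) (θ : ℝ) : ℝ := p 0 * Real.cos θ + p 1 * Real.sin θ

lemma suppF_cont (p : Plane) : Continuous (suppF p) := by
  unfold suppF; fun_prop

lemma suppF_linear (θ : ℝ) : IsLinearMap ℝ (fun p : Plane => suppF p θ) := by
  constructor
  · intro p q; simp [suppF, PiLp.add_apply]; ring
  · intro c p; simp [suppF, PiLp.smul_apply, smul_eq_mul]; ring

lemma cont_sup' (t : Finset Plane) (ht : t.Nonempty) :
    Continuous fun θ => t.sup' ht (fun p => suppF p θ) := by
  induction ht using Finset.Nonempty.cons_induction with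
  | singleton a =>
      simp only [Finset.sup'_singleton]
      exact suppF_cont a
  | cons a s h hs ih =>
      simp only [Finset.sup'_cons hs]
      exact (suppF_cont a).max ih

lemma cont_sSup {C : Set Plane} (hC : C.Finite) (hne : C.Nonempty) :
    Continuous fun θ => sSup ((fun p => suppF p θ) '' C) := by
  have hne' : hC.toFinset.Nonempty := by simpa using hne
  have : ∀ θ, sSup ((fun p => suppF p θ) '' C)
      = hC.toFinset.sup' hne' (fun p => suppF p θ) := by
    intro θ
    rw [Finset.sup'_eq_csSup_image, Set.Finite.coe_toFinset]
  simp only [this]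
  exact cont_sup' _ hne'

lemma le_sSup_of_mem_hull {C : Set Plane} (hC : C.Finite) {x : Plane}
    (hx : x ∈ convexHull ℝ C) (θ : ℝ) :
    suppF x θ ≤ sSup ((fun p => suppF p θ) '' C) := by
  have hb : BddAbove ((fun p => suppF p θ) '' C) := (hC.image _).bddAbove
  have hsub : C ⊆ {p : Plane | suppF p θ ≤ sSup ((fun p => suppF p θ) '' C)} :=
    fun p hp => le_csSup hb ⟨p, hp, rfl⟩
  exact convexHull_min hsub (convex_halfSpace_le (suppF_linear θ) _) hx

lemma perim_eq (C : Set Plane) :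
    perim C = ∫ θ in (0:ℝ)..(2 * Real.pi), sSup ((fun p => suppF p θ) '' C) := rfl

lemma integral_suppF (x : Plane) :
    ∫ θ in (0:ℝ)..(2 * Real.pi), suppF x θ = 0 := by
  unfold suppF
  rw [intervalIntegral.integral_add ((by fun_prop : Continuous fun θ => x 0 * Real.cos θ).intervalIntegrable _ _) ((by fun_prop : Continuous fun θ => x 1 * Real.sin θ).intervalIntegrable _ _)]
  rw [intervalIntegral.integral_const_mul, intervalIntegral.integral_const_mul,
    integral_cos, integral_sin]
  simp [Real.sin_two_pi, Real.cos_two_pi]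

lemma perim_union_le {C₁ C₂ : Set Plane} (h₁ : C₁.Finite) (h₂ : C₂.Finite)
    (hn₁ : C₁.Nonempty) (hn₂ : C₂.Nonempty)
    (hx : (convexHull ℝ C₁ ∩ convexHull ℝ C₂).Nonempty) :
    perim (C₁ ∪ C₂) ≤ perim C₁ + perim C₂ := by
  obtain ⟨x, hx₁, hx₂⟩ := hx
  have h12 : Continuous fun θ => sSup ((fun p => suppF p θ) '' (C₁ ∪ C₂)) :=
    cont_sSup (h₁.union h₂) (hn₁.mono Set.subset_union_left)
  have hc₁ := cont_sSup h₁ hn₁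
  have hc₂ := cont_sSup h₂ hn₂
  have key : ∀ θ ∈ Set.Icc (0:ℝ) (2 * Real.pi),
      sSup ((fun p => suppF p θ) '' (C₁ ∪ C₂))
        ≤ sSup ((fun p => suppF p θ) '' C₁) + sSup ((fun p => suppF p θ) '' C₂)
          - suppF x θ := by
    intro θ _
    rw [Set.image_union, csSup_union ((h₁.image _).bddAbove) (hn₁.image _)
      ((h₂.image _).bddAbove) (hn₂.image _)]
    have l₁ := le_sSup_of_mem_hull h₁ hx₁ θ
    have l₂ := le_sSup_of_mem_hull h₂ hx₂ θ
    rw [sup_le_iff]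
    constructor <;> linarith
  have hmono := intervalIntegral.integral_mono_on (μ := MeasureTheory.volume)
    (by positivity : (0:ℝ) ≤ 2 * Real.pi)
    (h12.intervalIntegrable _ _)
    (((hc₁.add hc₂).sub (suppF_cont x)).intervalIntegrable _ _) key
  rw [perim_eq, perim_eq, perim_eq]
  calc (∫ θ in (0:ℝ)..(2 * Real.pi), sSup ((fun p => suppF p θ) '' (C₁ ∪ C₂)))
      ≤ ∫ θ in (0:ℝ)..(2 * Real.pi),
          (sSup ((fun p => suppF p θ) '' C₁) + sSup ((fun p => suppF p θ) '' C₂)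
            - suppF x θ) := hmono
    _ = (∫ θ in (0:ℝ)..(2 * Real.pi), sSup ((fun p => suppF p θ) '' C₁))
        + (∫ θ in (0:ℝ)..(2 * Real.pi), sSup ((fun p => suppF p θ) '' C₂))
        - (∫ θ in (0:ℝ)..(2 * Real.pi), suppF x θ) := by
        rw [intervalIntegral.integral_sub (f := fun θ =>
            sSup ((fun p => suppF p θ) '' C₁) + sSup ((fun p => suppF p θ) '' C₂))
          (g := fun θ => suppF x θ) ((hc₁.add hc₂).intervalIntegrable _ _)
          ((suppF_cont x).intervalIntegrable _ _),
          intervalIntegral.integral_add (hc₁.intervalIntegrable _ _)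
          (hc₂.intervalIntegrable _ _)]
    _ ≤ _ := by rw [integral_suppF]; simp


/-- `P` is a partition of `S` into nonempty clusters. -/
def IsPartition (S : Set Plane) (P : Finset (Set Plane)) : Prop :=
  (∀ C ∈ P, (C : Set Plane).Nonempty) ∧
  (⋃₀ (P : Set (Set Plane)) = S) ∧
  ((P : Set (Set Plane)).PairwiseDisjoint id)

/-- A `k`-clustering of `S`: a partition of `S` into at most `k` nonempty clusters. -/
def IsKClustering (S : Set Plane) (k : ℕ) (P : Finset (Set Plane)) : Prop :=
  IsPartition S P ∧ P.card ≤ k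

/-- Cost of a clustering: sum of the perimeters of the clusters. -/
noncomputable def clusteringCost (P : Finset (Set Plane)) : ℝ :=
  ∑ C ∈ P, perim C

/-- there is an optimal `k`-clustering whose clusters have pairwise
disjoint convex hulls. -/
theorem exists_optimal_k_clustering_disjoint_hulls
    (S : Set Plane) (hS : S.Finite) (hSne : S.Nonempty)
    (k : ℕ) (hk1 : 1 ≤ k) (hkn : k ≤ S.ncard) :
    ∃ P : Finset (Set Plane), IsKClustering S k P ∧
      (∀ Q : Finset (Set Plane), IsKClustering S k Q →
        clusteringCost P ≤ clusteringCost Q) ∧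
      (∀ C₁ ∈ P, ∀ C₂ ∈ P, C₁ ≠ C₂ →
        convexHull ℝ C₁ ∩ convexHull ℝ C₂ = ∅) := by
  classical
  -- the singleton-cluster partition {S}
  have hbase : IsKClustering S k ({S} : Finset (Set Plane)) := by
    refine ⟨⟨?_, ?_, ?_⟩, ?_⟩
    · intro C hC; rw [Finset.mem_singleton] at hC; subst hC; exact hSne
    · simp
    · simp
    · simpa using hk1
  -- finiteness of the collection of k-clusterings
  have hfin : {P : Finset (Set Plane) | IsKClustering S k P}.Finite := by
    have h1 : {t : Set (Set Plane) | t ⊆ {C : Set Plane | C ⊆ S}}.Finite :=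
      hS.finite_subsets.finite_subsets
    have h2 : {P : Finset (Set Plane) |
        (↑P : Set (Set Plane)) ⊆ {C : Set Plane | C ⊆ S}}.Finite := by
      have := h1.preimage (f := fun P : Finset (Set Plane) => (↑P : Set (Set Plane)))
        (Set.injOn_of_injective Finset.coe_injective)
      exact this
    refine h2.subset ?_
    rintro P ⟨⟨hne, hun, hdisj⟩, hcard⟩ C hC
    exact hun ▸ Set.subset_sUnion_of_mem hC
  set F := hfin.toFinset with hF
  have hFmem : ∀ P : Finset (Set Plane), P ∈ F ↔ IsKClustering S k P := by
    intro P; rw [hF, Set.Finite.mem_toFinset]; rfl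
  have hFne : F.Nonempty := ⟨{S}, (hFmem _).2 hbase⟩
  obtain ⟨M, hMF, hMmin⟩ := F.exists_min_image clusteringCost hFne
  set F' := F.filter (fun Q => clusteringCost Q ≤ clusteringCost M) with hF'
  have hF'ne : F'.Nonempty := ⟨M, by simp [hF', hMF]⟩
  obtain ⟨P, hPF', hPmin⟩ := F'.exists_min_image Finset.card hF'ne
  have hPF : P ∈ F := (Finset.mem_filter.1 hPF').1
  have hPcost : clusteringCost P ≤ clusteringCost M := (Finset.mem_filter.1 hPF').2
  have hPclus : IsKClustering S k P := (hFmem _).1 hPF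
  refine ⟨P, hPclus, ?_, ?_⟩
  · intro Q hQ
    exact hPcost.trans (hMmin Q ((hFmem _).2 hQ))
  · intro C₁ h₁ C₂ h₂ hne
    by_contra hcon
    obtain ⟨x, hx₁, hx₂⟩ := Set.nonempty_iff_ne_empty.2 hcon
    obtain ⟨⟨hPne, hPun, hPdisj⟩, hPcard⟩ := hPclus
    have h₁' : (C₁ : Set Plane) ∈ (↑P : Set (Set Plane)) := Finset.mem_coe.2 h₁
    have h₂' : (C₂ : Set Plane) ∈ (↑P : Set (Set Plane)) := Finset.mem_coe.2 h₂
    have hC₁S : C₁ ⊆ S := hPun ▸ Set.subset_sUnion_of_mem h₁'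
    have hC₂S : C₂ ⊆ S := hPun ▸ Set.subset_sUnion_of_mem h₂'
    have hn₁ : C₁.Nonempty := hPne _ h₁
    have hn₂ : C₂.Nonempty := hPne _ h₂
    set E : Finset (Set Plane) := (P.erase C₁).erase C₂ with hE
    have hEsub : E ⊆ P := (Finset.erase_subset _ _).trans (Finset.erase_subset _ _)
    have hC₂E : C₂ ∈ P.erase C₁ := Finset.mem_erase.2 ⟨hne.symm, h₂⟩
    -- the merged cluster is not in E
    have hnotmem : C₁ ∪ C₂ ∉ E := by
      intro hmem
      have hCP : C₁ ∪ C₂ ∈ P := hEsub hmem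
      have hne1 : C₁ ∪ C₂ ≠ C₁ := (Finset.mem_erase.1 (Finset.mem_of_mem_erase hmem)).1
      have hdis := hPdisj (Finset.mem_coe.2 hCP) h₁' hne1
      exact (hn₁.mono (Set.subset_inter Set.subset_union_left (subset_refl C₁))).ne_empty
        (Set.disjoint_iff_inter_eq_empty.1 hdis)
    set Q : Finset (Set Plane) := insert (C₁ ∪ C₂) E with hQ
    -- Q is a k-clustering
    have hQne : ∀ C ∈ Q, (C : Set Plane).Nonempty := by
      intro C hC
      rcases Finset.mem_insert.1 hC with rfl | hC
      · exact hn₁.mono Set.subset_union_left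
      · exact hPne _ (hEsub hC)
    have hQun : ⋃₀ (↑Q : Set (Set Plane)) = S := by
      rw [← hPun]
      ext y
      simp only [hQ, Finset.coe_insert, Set.mem_sUnion, Set.mem_insert_iff,
        Finset.mem_coe, hE, Finset.mem_erase]
      constructor
      · rintro ⟨C, (rfl | ⟨hne2, hne1, hCP⟩), hyC⟩
        · rcases hyC with h | h
          · exact ⟨C₁, h₁, h⟩
          · exact ⟨C₂, h₂, h⟩
        · exact ⟨C, hCP, hyC⟩
      · rintro ⟨C, hCP, hyC⟩
        by_cases e1 : C = C₁
        · exact ⟨C₁ ∪ C₂, Or.inl rfl, Or.inl (e1 ▸ hyC)⟩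
        by_cases e2 : C = C₂
        · exact ⟨C₁ ∪ C₂, Or.inl rfl, Or.inr (e2 ▸ hyC)⟩
        · exact ⟨C, Or.inr ⟨e2, e1, hCP⟩, hyC⟩
    have hQdisj : (↑Q : Set (Set Plane)).PairwiseDisjoint id := by
      rw [hQ, Finset.coe_insert]
      refine Set.PairwiseDisjoint.insert
        (hPdisj.subset (fun C hC => Finset.mem_coe.2 (hEsub (Finset.mem_coe.1 hC)))) ?_
      intro C hC hneC
      have hCE : C ∈ E := Finset.mem_coe.1 hC
      have hne2 : C ≠ C₂ := (Finset.mem_erase.1 hCE).1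
      have hne1 : C ≠ C₁ := (Finset.mem_erase.1 (Finset.mem_of_mem_erase hCE)).1
      have hCP' : (C : Set Plane) ∈ (↑P : Set (Set Plane)) := Finset.mem_coe.2 (hEsub hCE)
      simp only [id]
      exact Set.disjoint_union_left.2
        ⟨hPdisj h₁' hCP' (Ne.symm hne1), hPdisj h₂' hCP' (Ne.symm hne2)⟩
    have hcard2 : 2 ≤ P.card := Finset.one_lt_card.2 ⟨C₁, h₁, C₂, h₂, hne⟩
    have hEcard : E.card = P.card - 2 := by
      rw [hE, Finset.card_erase_of_mem hC₂E, Finset.card_erase_of_mem h₁]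
      omega
    have hQcard : Q.card < P.card := by
      have := Finset.card_insert_le (C₁ ∪ C₂) E
      rw [hQ]
      omega
    have hQclus : IsKClustering S k Q :=
      ⟨⟨hQne, hQun, hQdisj⟩, le_trans (le_of_lt hQcard) hPcard⟩
    -- cost comparison
    have hmerge : perim (C₁ ∪ C₂) ≤ perim C₁ + perim C₂ :=
      perim_union_le (hS.subset hC₁S) (hS.subset hC₂S) hn₁ hn₂ ⟨x, hx₁, hx₂⟩
    have hsumE : perim C₁ + (perim C₂ + ∑ C ∈ E, perim C) = ∑ C ∈ P, perim C := by
      rw [hE, Finset.add_sum_erase _ _ hC₂E, Finset.add_sum_erase _ _ h₁]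
    have hQcost : clusteringCost Q ≤ clusteringCost P := by
      have : clusteringCost Q = perim (C₁ ∪ C₂) + ∑ C ∈ E, perim C :=
        Finset.sum_insert hnotmem
      unfold clusteringCost at *
      linarith [hsumE, hmerge, this]
    -- contradiction with minimal cardinality
    have hQF' : Q ∈ F' := by
      rw [hF', Finset.mem_filter]
      exact ⟨(hFmem _).2 hQclus, hQcost.trans hPcost⟩
    exact absurd (hPmin Q hQF') (by omega)
end
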